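/- arXiv:1905.02939 — 9 statements merged into one kernel-verified Lean document; each statement's English description precedes it below -/
import Mathlib

section
/- For the reversible (SEO) parallel tempering index process on {0,...,N} with i.i.d. direction variables and swap success probabilities s_1,...,s_N (with r_i = 1 - s_i), the expected round trip time satisfies E[T] = 2N(N+1) + 2(N+1) * sum_{i=1}^N r_i/s_i. -/
lemma seo_aux (N : ℕ) (hN : 1 ≤ N) (s : ℕ → ℝ)
    (hs : ∀ i, 1 ≤ i → i ≤ N → s i ≠ 0)
    (a : ℕ → ℝ)
    (hInt : ∀ i, 1 ≤ i → i ≤ N - 1 →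
      a i = (1/2) * s (i+1) * (a (i+1) + 1) + (1/2) * s i * (a (i-1) + 1)
        + (1/2) * ((1 - s (i+1)) + (1 - s i)) * (a i + 1))
    (h0 : a 0 = (1/2) * s 1 * (a 1 + 1) + (1 - (1/2) * s 1) * (a 0 + 1))
    (hNa : a N = 0) :
    a 0 = ∑ i ∈ Finset.Icc 1 N, 2 * (i:ℝ) / s i := by
  have key : ∀ i, 1 ≤ i → i ≤ N → s i * (a (i-1) - a i) = 2*(i:ℝ) := by
    intro i hi1
    induction i with
    | zero => omega
    | succ j ih =>
      intro hiN
      rcases Nat.eq_zero_or_pos j with h | hj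
      · subst h
        simp only [Nat.add_sub_cancel, Nat.cast_one]
        linear_combination 2 * h0
      · have hrec := hInt j hj (by omega)
        have ihj := ih hj (by omega)
        simp only [Nat.add_sub_cancel] at *
        push_cast
        linear_combination 2 * hrec + ihj
  have diff : ∀ i, i < N → a i - a (i+1) = 2*((i:ℝ)+1)/s (i+1) := by
    intro i hi
    have h := key (i+1) (by omega) (by omega)
    have hs' := hs (i+1) (by omega) (by omega)
    simp only [Nat.add_sub_cancel] at h
    rw [eq_div_iff hs']
    push_cast at h ⊢
    linear_combination h
  calc a 0 = a 0 - a N := by rw [hNa]; ring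
    _ = ∑ i ∈ Finset.range N, (a i - a (i+1)) := (Finset.sum_range_sub' a N).symm
    _ = ∑ i ∈ Finset.range N, 2*((i:ℝ)+1)/s (i+1) :=
        Finset.sum_congr rfl fun i hi => diff i (Finset.mem_range.mp hi)
    _ = ∑ i ∈ Finset.Icc 1 N, 2 * (i:ℝ) / s i := by
        rw [show Finset.Icc 1 N = Finset.Ico 1 (N+1) by ext x; simp only [Finset.mem_Icc, Finset.mem_Ico]; omega,
          Finset.sum_Ico_eq_sum_range]
        simp only [Nat.add_sub_cancel]
        apply Finset.sum_congr rfl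
        intro i _
        push_cast
        ring_nf



/-- Expected round trip time for the reversible (SEO) parallel tempering index
process: with swap probabilities `s 1, …, s N` (and `r i = 1 - s i`), if `aUp i`
denotes the expected hitting time of level `N` from level `i` and `aDown i` the
expected hitting time of level `0` from level `i` under the lazy SEO dynamics,
then `E[T] = aUp 0 + aDown N = 2N(N+1) + 2(N+1) ∑ r_i / s_i`. -/
theorem seo_round_trip (N : ℕ) (hN : 1 ≤ N) (s : ℕ → ℝ)
    (hs : ∀ i, 1 ≤ i → i ≤ N → 0 < s i ∧ s i ≤ 1)
    (aUp aDown : ℕ → ℝ)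
    (hUpInt : ∀ i, 1 ≤ i → i ≤ N - 1 →
      aUp i = (1/2) * s (i+1) * (aUp (i+1) + 1) + (1/2) * s i * (aUp (i-1) + 1)
        + (1/2) * ((1 - s (i+1)) + (1 - s i)) * (aUp i + 1))
    (hUp0 : aUp 0 = (1/2) * s 1 * (aUp 1 + 1) + (1 - (1/2) * s 1) * (aUp 0 + 1))
    (hUpN : aUp N = 0)
    (hDownInt : ∀ i, 1 ≤ i → i ≤ N - 1 →
      aDown i = (1/2) * s (i+1) * (aDown (i+1) + 1) + (1/2) * s i * (aDown (i-1) + 1)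
        + (1/2) * ((1 - s (i+1)) + (1 - s i)) * (aDown i + 1))
    (hDownN : aDown N = (1/2) * s N * (aDown (N-1) + 1) + (1 - (1/2) * s N) * (aDown N + 1))
    (hDown0 : aDown 0 = 0) :
    aUp 0 + aDown N
      = 2 * N * (N + 1) + 2 * (N + 1) * ∑ i ∈ Finset.Icc 1 N, (1 - s i) / s i := by
    have hsne : ∀ i, 1 ≤ i → i ≤ N → s i ≠ 0 := fun i h1 h2 => ne_of_gt (hs i h1 h2).1
    have hup : aUp 0 = ∑ i ∈ Finset.Icc 1 N, 2 * (i:ℝ) / s i :=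
      seo_aux N hN s hsne aUp hUpInt hUp0 hUpN
    -- reflected process
    set t : ℕ → ℝ := fun j => s (N + 1 - j) with ht
    set b : ℕ → ℝ := fun j => aDown (N - j) with hb
    have htne : ∀ j, 1 ≤ j → j ≤ N → t j ≠ 0 := by
      intro j h1 h2
      exact hsne (N + 1 - j) (by omega) (by omega)
    have hbInt : ∀ j, 1 ≤ j → j ≤ N - 1 →
        b j = (1/2) * t (j+1) * (b (j+1) + 1) + (1/2) * t j * (b (j-1) + 1)
          + (1/2) * ((1 - t (j+1)) + (1 - t j)) * (b j + 1) := by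
      intro j hj1 hj2
      have hi := hDownInt (N - j) (by omega) (by omega)
      have e1 : N - j + 1 = N + 1 - j := by omega
      have e2 : N - j - 1 = N - (j + 1) := by omega
      have e3 : N - j + 1 = N - (j - 1) := by omega
      have e4 : N + 1 - (j + 1) = N - j := by omega
      simp only [hb, ht, e4]
      rw [e1, e2] at hi
      rw [show N - (j - 1) = N + 1 - j by omega]
      linear_combination hi
    have hb0 : b 0 = (1/2) * t 1 * (b 1 + 1) + (1 - (1/2) * t 1) * (b 0 + 1) := by
      simp only [hb, ht, Nat.sub_zero, Nat.add_sub_cancel]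
      exact hDownN
    have hbN : b N = 0 := by simp [hb, hDown0]
    have hdown : aDown N = ∑ j ∈ Finset.Icc 1 N, 2 * (j:ℝ) / t j := by
      have := seo_aux N hN t htne b hbInt hb0 hbN
      simpa [hb] using this
    -- reindex the reflected sum
    have hre : ∑ j ∈ Finset.Icc 1 N, 2 * (j:ℝ) / t j
        = ∑ i ∈ Finset.Icc 1 N, 2 * (((N:ℝ) + 1) - i) / s i := by
      refine Finset.sum_nbij' (fun j => N + 1 - j) (fun i => N + 1 - i) ?_ ?_ ?_ ?_ ?_
      · intro j hj; simp only [Finset.mem_Icc] at *; omega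
      · intro i hi; simp only [Finset.mem_Icc] at *; omega
      · intro j hj; simp only [Finset.mem_Icc] at hj; show N + 1 - (N + 1 - j) = j; omega
      · intro i hi; simp only [Finset.mem_Icc] at hi; show N + 1 - (N + 1 - i) = i; omega
      · intro j hj
        simp only [Finset.mem_Icc] at hj
        have : ((N + 1 - j : ℕ) : ℝ) = (N:ℝ) + 1 - (j:ℝ) := by
          push_cast [Nat.cast_sub (by omega : j ≤ N + 1)]; ring
        rw [ht, this]
        ring_nf
    rw [hup, hdown, hre, ← Finset.sum_add_distrib]
    have hcard : (Finset.Icc 1 N).card = N := by simp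
    have : ∀ i ∈ Finset.Icc 1 N,
        2 * (i:ℝ) / s i + 2 * (((N:ℝ) + 1) - i) / s i
          = 2 * ((N:ℝ) + 1) + 2 * ((N:ℝ) + 1) * ((1 - s i) / s i) := by
      intro i hi
      simp only [Finset.mem_Icc] at hi
      have h0 := hsne i hi.1 hi.2
      field_simp
      ring
    rw [Finset.sum_congr rfl this, Finset.sum_add_distrib, Finset.sum_const, hcard,
      ← Finset.mul_sum]
    ring
end

section
/- For the non-reversible (DEO) parallel tempering index process with swap probabilities s_1,...,s_N (r_i = 1 - s_i), the expected round trip time satisfies E[T] = 2(N+1) + 2(N+1) * sum_{i=1}^N r_i/s_i. -/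
lemma up_key (N : ℕ) (hN : 1 ≤ N) (s : ℕ → ℝ)
    (hs : ∀ i, 1 ≤ i → i ≤ N → 0 < s i ∧ s i ≤ 1)
    (P M : ℕ → ℝ)
    (hP : ∀ i, i ≤ N - 1 → P i = s (i+1) * (P (i+1) + 1) + (1 - s (i+1)) * (M i + 1))
    (hM : ∀ i, 1 ≤ i → i ≤ N → M i = s i * (M (i-1) + 1) + (1 - s i) * (P i + 1))
    (hRefl : M 0 = P 0 + 1)
    (hTarget : P N = 0) :
    M 0 = (N + 1) + 2 * ∑ i ∈ Finset.Icc 1 N, (i : ℝ) * ((1 - s i) / s i) := by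
  have key : ∀ i, 1 ≤ i → i ≤ N → s i * (M (i-1) - P i) = 2 * i := by
    intro i hi
    induction i, hi using Nat.le_induction with
    | base =>
      intro _
      have h0 := hP 0 (by omega)
      simp only [Nat.sub_self]
      push_cast
      linear_combination hRefl + h0
    | succ i hi ih =>
      intro hle
      have hiN : i ≤ N := by omega
      have h1 := hM i hi hiN
      have h2 := hP i (by omega)
      have h3 := ih hiN
      simp only [Nat.add_sub_cancel]
      push_cast
      linear_combination h1 + h2 + h3
  have step : ∀ i, 1 ≤ i → i ≤ N →
      P (i-1) - P i = 2 * i * ((1 - s i) / s i) + 1 := by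
    intro i hi hiN
    have hsi := (hs i hi hiN).1
    have hD : M (i-1) - P i = 2 * i / s i := by
      rw [eq_div_iff (ne_of_gt hsi)]
      linear_combination key i hi hiN
    have h2 := hP (i-1) (by omega)
    rw [Nat.sub_add_cancel hi] at h2
    have : P (i-1) - P i = (1 - s i) * (M (i-1) - P i) + 1 := by
      linear_combination h2
    rw [this, hD]
    field_simp
  have tele : P 0 - P N = ∑ j ∈ Finset.range N, (P j - P (j+1)) :=
    (Finset.sum_range_sub' P N).symm
  have hsum : ∑ j ∈ Finset.range N, (P j - P (j+1))
      = ∑ j ∈ Finset.range N, (2 * (j+1 : ℝ) * ((1 - s (j+1)) / s (j+1)) + 1) := by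
    apply Finset.sum_congr rfl
    intro j hj
    have hj' : j + 1 ≤ N := Finset.mem_range.mp hj
    have := step (j+1) (by omega) hj'
    simpa using this
  have hIcc : ∑ i ∈ Finset.Icc 1 N, (i : ℝ) * ((1 - s i) / s i)
      = ∑ j ∈ Finset.range N, ((j+1 : ℝ)) * ((1 - s (j+1)) / s (j+1)) := by
    rw [show Finset.Icc 1 N = Finset.Ico 1 (N+1) by rw [Finset.Ico_add_one_right_eq_Icc],
      Finset.sum_Ico_eq_sum_range]
    simp [add_comm 1]
  rw [hRefl]
  have hP0 : P 0 = ∑ j ∈ Finset.range N, (2 * (j+1 : ℝ) * ((1 - s (j+1)) / s (j+1)) + 1) := by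
    rw [← hsum, ← tele, hTarget]; ring
  rw [hP0, hIcc, Finset.sum_add_distrib, Finset.sum_const, Finset.mul_sum]
  simp only [Finset.card_range, nsmul_eq_mul, mul_one, mul_assoc]
  ring

/-- Expected round trip time for the non-reversible (DEO) parallel tempering index
process: with swap probabilities `s 1, …, s N` (and `r i = 1 - s i`), if
`aUpP i, aUpM i` denote the expected hitting times of the state `(N, +1)` from
`(i, +1)` resp. `(i, -1)`, and `aDownP i, aDownM i` the expected hitting times of
`(0, -1)`, under the DEO dynamics (moving in the current direction with
probability `s`, flipping the direction on rejection, and reflecting at the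
boundaries), then `E[T] = aUpM 0 + aDownP N = 2(N+1) + 2(N+1) ∑ r_i / s_i`. -/
theorem deo_round_trip (N : ℕ) (hN : 1 ≤ N) (s : ℕ → ℝ)
    (hs : ∀ i, 1 ≤ i → i ≤ N → 0 < s i ∧ s i ≤ 1)
    (aUpP aUpM aDownP aDownM : ℕ → ℝ)
    (hUpP : ∀ i, i ≤ N - 1 →
      aUpP i = s (i+1) * (aUpP (i+1) + 1) + (1 - s (i+1)) * (aUpM i + 1))
    (hUpM : ∀ i, 1 ≤ i → i ≤ N →
      aUpM i = s i * (aUpM (i-1) + 1) + (1 - s i) * (aUpP i + 1))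
    (hUpRefl : aUpM 0 = aUpP 0 + 1)
    (hUpTarget : aUpP N = 0)
    (hDownP : ∀ i, i ≤ N - 1 →
      aDownP i = s (i+1) * (aDownP (i+1) + 1) + (1 - s (i+1)) * (aDownM i + 1))
    (hDownM : ∀ i, 1 ≤ i → i ≤ N →
      aDownM i = s i * (aDownM (i-1) + 1) + (1 - s i) * (aDownP i + 1))
    (hDownRefl : aDownP N = aDownM N + 1)
    (hDownTarget : aDownM 0 = 0) :
    aUpM 0 + aDownP N
      = 2 * (N + 1) + 2 * (N + 1) * ∑ i ∈ Finset.Icc 1 N, (1 - s i) / s i := by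
  have hUp := up_key N hN s hs aUpP aUpM hUpP hUpM hUpRefl hUpTarget
  -- mirrored system for the down process
  set s' : ℕ → ℝ := fun i => s (N + 1 - i) with hs'def
  set P' : ℕ → ℝ := fun i => aDownM (N - i) with hP'def
  set M' : ℕ → ℝ := fun i => aDownP (N - i) with hM'def
  have hs' : ∀ i, 1 ≤ i → i ≤ N → 0 < s' i ∧ s' i ≤ 1 := by
    intro i h1 h2
    exact hs (N + 1 - i) (by omega) (by omega)
  have hP' : ∀ i, i ≤ N - 1 →
      P' i = s' (i+1) * (P' (i+1) + 1) + (1 - s' (i+1)) * (M' i + 1) := by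
    intro i hi
    have e1 : N + 1 - (i+1) = N - i := by omega
    have e2 : N - i - 1 = N - (i+1) := by omega
    have h := hDownM (N - i) (by omega) (by omega)
    simp only [hs'def, hP'def, hM'def, e1]
    rw [h, e2]
  have hM' : ∀ i, 1 ≤ i → i ≤ N →
      M' i = s' i * (M' (i-1) + 1) + (1 - s' i) * (P' i + 1) := by
    intro i h1 h2
    have e1 : N - i + 1 = N + 1 - i := by omega
    have e2 : N - (i-1) = N - i + 1 := by omega
    have h := hDownP (N - i) (by omega)
    simp only [hs'def, hP'def, hM'def, e2]
    rw [h, e1]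
  have hRefl' : M' 0 = P' 0 + 1 := by
    simp only [hP'def, hM'def, Nat.sub_zero]; exact hDownRefl
  have hTarget' : P' N = 0 := by
    simp only [hP'def, Nat.sub_self]; exact hDownTarget
  have hDown := up_key N hN s' hs' P' M' hP' hM' hRefl' hTarget'
  have hDown' : aDownP N = (N + 1) + 2 * ∑ i ∈ Finset.Icc 1 N,
      (i : ℝ) * ((1 - s (N + 1 - i)) / s (N + 1 - i)) := by
    simpa [hM'def, hs'def] using hDown
  -- reindex the down sum
  have hRe : ∑ i ∈ Finset.Icc 1 N, (i : ℝ) * ((1 - s (N + 1 - i)) / s (N + 1 - i))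
      = ∑ i ∈ Finset.Icc 1 N, ((N : ℝ) + 1 - i) * ((1 - s i) / s i) := by
    apply Finset.sum_nbij' (i := fun a => N + 1 - a) (j := fun a => N + 1 - a)
    · intro a ha
      simp only [Finset.mem_Icc] at ha ⊢
      omega
    · intro a ha
      simp only [Finset.mem_Icc] at ha ⊢
      omega
    · intro a ha
      simp only [Finset.mem_Icc] at ha
      omega
    · intro a ha
      simp only [Finset.mem_Icc] at ha
      omega
    · intro a ha
      simp only [Finset.mem_Icc] at ha
      have : ((N + 1 - a : ℕ) : ℝ) = (N : ℝ) + 1 - a := by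
        push_cast [Nat.cast_sub (by omega : a ≤ N + 1)]; ring
      rw [this]
      ring
  rw [hUp, hDown', hRe]
  have hcomb : (∑ i ∈ Finset.Icc 1 N, (i : ℝ) * ((1 - s i) / s i))
      + ∑ i ∈ Finset.Icc 1 N, ((N : ℝ) + 1 - i) * ((1 - s i) / s i)
      = ((N : ℝ) + 1) * ∑ i ∈ Finset.Icc 1 N, (1 - s i) / s i := by
    rw [← Finset.sum_add_distrib, Finset.mul_sum]
    apply Finset.sum_congr rfl
    intro i _
    ring
  linarith
end

section
/- Let a^i (i = 0,...,N) satisfy the boundary condition a^0 satisfies a^0 = (1/2)s_1(a^1 + 1) + (1 - (1/2)s_1)(a^0 + 1), the interior recursion a^i = (1/2)s_{i+1}(a^{i+1}+1) + (1/2)s_i(a^{i-1}+1) + (1/2)(r_{i+1}+r_i)(a^i+1) for 1 ≤ i ≤ N-1 where r_j = 1 - s_j, and a^N = 0. Then a^0 = sum_{i=1}^N 2i/s_i. -/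
/-- Expected hitting time of level `N` for the lazy SEO random walk on
`{0, …, N}`: if `a i` satisfies the boundary equation at `0`, the interior
recursion, and `a N = 0`, then `a 0 = ∑_{i=1}^N 2 i / s i`. -/
theorem seo_hitting_time (N : ℕ) (hN : 1 ≤ N) (s : ℕ → ℝ)
    (hs : ∀ i, 1 ≤ i → i ≤ N → 0 < s i ∧ s i ≤ 1)
    (a : ℕ → ℝ)
    (h0 : a 0 = (1/2) * s 1 * (a 1 + 1) + (1 - (1/2) * s 1) * (a 0 + 1))
    (hInt : ∀ i, 1 ≤ i → i ≤ N - 1 →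
      a i = (1/2) * s (i+1) * (a (i+1) + 1) + (1/2) * s i * (a (i-1) + 1)
        + (1/2) * ((1 - s (i+1)) + (1 - s i)) * (a i + 1))
    (hN0 : a N = 0) :
    a 0 = ∑ i ∈ Finset.Icc 1 N, 2 * (i : ℝ) / s i := by
  have key : ∀ i, 1 ≤ i → i ≤ N → s i * (a (i-1) - a i) = 2 * i := by
    intro i h1
    induction i, h1 using Nat.le_induction with
    | base =>
      intro _
      norm_num
      nlinarith [h0]
    | succ n hn ih =>
      intro hle
      have hrec := hInt n hn (by omega)
      have hihv := ih (by omega)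
      push_cast
      push_cast at hihv
      nlinarith [hrec, hihv]
  have sum : ∀ k, k ≤ N → a 0 = a k + ∑ i ∈ Finset.Icc 1 k, 2 * (i:ℝ) / s i := by
    intro k
    induction k with
    | zero => intro _; simp
    | succ n ih =>
      intro h
      have hk := key (n+1) (by omega) h
      have hs' := (hs (n+1) (by omega) h).1
      have ihv := ih (by omega)
      rw [Finset.sum_Icc_succ_top (by omega : 1 ≤ n+1)]
      have hd : a n - a (n+1) = 2*((n:ℝ)+1)/s (n+1) := by
        rw [eq_div_iff (ne_of_gt hs')]
        simp only [Nat.add_sub_cancel] at hk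
        push_cast at hk
        linarith [hk]
      push_cast
      linarith [ihv, hd]
  have := sum N le_rfl
  rw [hN0] at this
  linarith
end

section
/- Suppose that the absolute value of V is integrable with respect to both π_0 and π. Then there exists a constant C > 0 such that for all β ∈ [0,1] and δ ≥ 0 with β + δ ≤ 1, |s(β, β+δ) - 1| ≤ C δ, where s(β,β') = E[exp(min{0, (β'-β)(V^{(β')} - V^{(β)})})] with V^{(β)}, V^{(β')} independent with laws equal to the pushforward of π^{(β)}, π^{(β')} under V. -/
open MeasureTheory

/-- If `|V|` is integrable with respect to both the reference `π₀` and the target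
`π = π^{(1)}`, then there is a constant `C > 0` such that the swap probability
function satisfies `|s(β, β+δ) - 1| ≤ C δ` for all `β ∈ [0,1]`, `δ ≥ 0` with
`β + δ ≤ 1`. Here `π^{(β)}` has density `exp(-β V)/Z(β)` with respect to `π₀`
and `s(β,β') = E[exp(min{0, (β'-β)(V^{(β')} - V^{(β)})})]` for independent
`V^{(β)}, V^{(β')}`. -/
theorem swap_prob_lipschitz {X : Type*} [MeasurableSpace X]
    (μ0 : Measure X) [IsProbabilityMeasure μ0]
    (V : X → ℝ) (hV : Measurable V)
    (Z : ℝ → ℝ)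
    (hZ : ∀ β ∈ Set.Icc (0:ℝ) 1, Z β = ∫ x, Real.exp (-β * V x) ∂μ0)
    (hZint : ∀ β ∈ Set.Icc (0:ℝ) 1, Integrable (fun x => Real.exp (-β * V x)) μ0)
    (hZpos : ∀ β ∈ Set.Icc (0:ℝ) 1, 0 < Z β)
    (πa : ℝ → Measure X)
    (hπ : ∀ β, πa β = μ0.withDensity (fun x => ENNReal.ofReal (Real.exp (-β * V x) / Z β)))
    (hV0 : Integrable V μ0) (hV1 : Integrable V (πa 1))
    (s : ℝ → ℝ → ℝ)
    (hs : ∀ β β', s β β' =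
      ∫ x, ∫ y, Real.exp (min 0 ((β' - β) * (V y - V x))) ∂(πa β') ∂(πa β)) :
    ∃ C > 0, ∀ β δ : ℝ, 0 ≤ β → 0 ≤ δ → β + δ ≤ 1 →
      |s β (β + δ) - 1| ≤ C * δ := by
  -- elementary inequality |exp(min 0 t) - 1| ≤ |t|
  have hexp_min : ∀ t : ℝ, |Real.exp (min 0 t) - 1| ≤ |t| := by
    intro t
    have h1 : Real.exp (min 0 t) ≤ 1 := by
      have := Real.exp_le_exp.mpr (min_le_left 0 t)
      simpa using this
    have h2 : min 0 t + 1 ≤ Real.exp (min 0 t) := Real.add_one_le_exp _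
    have h3 : -|t| ≤ min 0 t :=
      le_min (neg_nonpos_of_nonneg (abs_nonneg t)) (neg_abs_le t)
    rw [abs_sub_comm, abs_of_nonneg (by linarith)]
    linarith
  -- density nonnegativity
  have hd : ∀ β ∈ Set.Icc (0:ℝ) 1, ∀ x : X, 0 ≤ Real.exp (-β * V x) / Z β :=
    fun β hβ x => div_nonneg (Real.exp_pos _).le (hZpos β hβ).le
  have hdmeas : ∀ β : ℝ, Measurable (fun x => Real.exp (-β * V x) / Z β) :=
    fun β => ((hV.const_mul (-β)).exp).div_const _
  -- integral formula
  have hint : ∀ β ∈ Set.Icc (0:ℝ) 1, ∀ g : X → ℝ,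
      ∫ x, g x ∂(πa β) = ∫ x, g x * (Real.exp (-β * V x) / Z β) ∂μ0 := by
    intro β hβ g
    have hπ' : πa β = μ0.withDensity
        (fun x => (((Real.exp (-β * V x) / Z β).toNNReal : NNReal) : ENNReal)) := by
      rw [hπ]; rfl
    rw [hπ', integral_withDensity_eq_integral_smul ((hdmeas β).real_toNNReal)]
    congr 1; funext x
    rw [NNReal.smul_def, Real.coe_toNNReal _ (hd β hβ x), smul_eq_mul, mul_comm]
  -- integrability transfer
  have hIntIff : ∀ β ∈ Set.Icc (0:ℝ) 1, ∀ g : X → ℝ,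
      Integrable g (πa β) ↔ Integrable (fun x => g x * (Real.exp (-β * V x) / Z β)) μ0 := by
    intro β hβ g
    rw [hπ β, integrable_withDensity_iff ((hdmeas β).ennreal_ofReal)
      (Filter.Eventually.of_forall fun x => ENNReal.ofReal_lt_top)]
    have heq : (fun x => g x * (ENNReal.ofReal (Real.exp (-β * V x) / Z β)).toReal)
        = fun x => g x * (Real.exp (-β * V x) / Z β) := by
      funext x; rw [ENNReal.toReal_ofReal (hd β hβ x)]
    rw [heq]
  -- probability measures
  have hprob : ∀ β ∈ Set.Icc (0:ℝ) 1, IsProbabilityMeasure (πa β) := by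
    intro β hβ
    constructor
    rw [hπ β, withDensity_apply _ MeasurableSet.univ, Measure.restrict_univ,
      ← ofReal_integral_eq_lintegral_ofReal ((hZint β hβ).div_const _)
        (Filter.Eventually.of_forall fun x => hd β hβ x)]
    rw [integral_div, ← hZ β hβ, div_self (hZpos β hβ).ne']
    simp
  -- pointwise domination of annealed densities
  have hexpb : ∀ β ∈ Set.Icc (0:ℝ) 1, ∀ x : X,
      Real.exp (-β * V x) ≤ 1 + Real.exp (-V x) := by
    intro β hβ x
    rcases le_total 0 (V x) with h | h
    · have h1 : -β * V x ≤ 0 := by nlinarith [hβ.1]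
      have h2 : Real.exp (-β * V x) ≤ Real.exp 0 := Real.exp_le_exp.mpr h1
      have h3 := (Real.exp_pos (-V x)).le
      rw [Real.exp_zero] at h2; linarith
    · have h1 : -β * V x ≤ -V x := by nlinarith [hβ.2]
      have h2 : Real.exp (-β * V x) ≤ Real.exp (-V x) := Real.exp_le_exp.mpr h1
      linarith
  -- integrability of the dominating function G = |V| (1 + exp(-V))
  have h1mem : (1:ℝ) ∈ Set.Icc (0:ℝ) 1 := ⟨zero_le_one, le_refl 1⟩
  have hVe : Integrable (fun x => V x * Real.exp (-V x)) μ0 := by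
    have h1 := (hIntIff 1 h1mem V).mp hV1
    have h2 := h1.const_mul (Z 1)
    refine h2.congr (Filter.Eventually.of_forall fun x => ?_)
    have hz := (hZpos 1 h1mem).ne'
    field_simp
  have hG : Integrable (fun x => |V x| * (1 + Real.exp (-V x))) μ0 := by
    have h3 : Integrable (fun x => |V x| * Real.exp (-V x)) μ0 := by
      refine hVe.abs.congr (Filter.Eventually.of_forall fun x => ?_)
      show |V x * Real.exp (-V x)| = |V x| * Real.exp (-V x)
      rw [abs_mul, abs_of_pos (Real.exp_pos _)]
    refine (hV0.abs.add h3).congr (Filter.Eventually.of_forall fun x => ?_)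
    simp only [Pi.add_apply]
    ring
  -- uniform lower bound for Z via Jensen
  set m : ℝ := ∫ x, V x ∂μ0 with hm
  set c : ℝ := Real.exp (-|m|) with hc
  have hcpos : 0 < c := Real.exp_pos _
  have hZlow : ∀ β ∈ Set.Icc (0:ℝ) 1, c ≤ Z β := by
    intro β hβ
    have hj : Real.exp (∫ x, -β * V x ∂μ0) ≤ ∫ x, Real.exp (-β * V x) ∂μ0 :=
      convexOn_exp.map_integral_le Real.continuous_exp.continuousOn isClosed_univ
        (Filter.Eventually.of_forall fun x => Set.mem_univ _) (hV0.const_mul (-β))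
        (hZint β hβ)
    rw [integral_const_mul] at hj
    have h1 : β * m ≤ |m| := by
      calc β * m ≤ β * |m| := mul_le_mul_of_nonneg_left (le_abs_self m) hβ.1
        _ ≤ 1 * |m| := mul_le_mul_of_nonneg_right hβ.2 (abs_nonneg m)
        _ = |m| := one_mul _
    have h2 : c ≤ Real.exp (-β * m) := Real.exp_le_exp.mpr (by linarith)
    rw [hZ β hβ]
    calc c ≤ Real.exp (-β * m) := h2
      _ ≤ _ := hj
  -- uniform moment bound
  set M : ℝ := (∫ x, |V x| * (1 + Real.exp (-V x)) ∂μ0) / c with hMdef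
  have hM0 : 0 ≤ M :=
    div_nonneg (integral_nonneg fun x =>
      mul_nonneg (abs_nonneg _) (by positivity)) hcpos.le
  have hbnd : ∀ β ∈ Set.Icc (0:ℝ) 1, ∀ x : X,
      |V x| * (Real.exp (-β * V x) / Z β) ≤ |V x| * (1 + Real.exp (-V x)) / c := by
    intro β hβ x
    rw [mul_div_assoc]
    refine mul_le_mul_of_nonneg_left ?_ (abs_nonneg _)
    exact div_le_div₀ (by positivity) (hexpb β hβ x) hcpos (hZlow β hβ)
  have hMom : ∀ β ∈ Set.Icc (0:ℝ) 1,
      Integrable V (πa β) ∧ ∫ x, |V x| ∂(πa β) ≤ M := by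
    intro β hβ
    have hIV : Integrable V (πa β) := by
      rw [hIntIff β hβ V]
      refine (hG.div_const c).mono'
        ((hV.mul (hdmeas β)).aestronglyMeasurable)
        (Filter.Eventually.of_forall fun x => ?_)
      rw [Real.norm_eq_abs, abs_mul, abs_of_nonneg (hd β hβ x)]
      exact hbnd β hβ x
    have hIVa : Integrable (fun x => |V x| * (Real.exp (-β * V x) / Z β)) μ0 :=
      (hIntIff β hβ (fun x => |V x|)).mp hIV.abs
    refine ⟨hIV, ?_⟩
    rw [hint β hβ (fun x => |V x|)]
    calc ∫ x, |V x| * (Real.exp (-β * V x) / Z β) ∂μ0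
        ≤ ∫ x, |V x| * (1 + Real.exp (-V x)) / c ∂μ0 :=
          integral_mono hIVa (hG.div_const c) (fun x => hbnd β hβ x)
      _ = M := by rw [hMdef, integral_div]
  -- main estimate
  refine ⟨2 * M + 1, by positivity, ?_⟩
  intro β δ hβ0 hδ0 hβδ
  have hβm : β ∈ Set.Icc (0:ℝ) 1 := ⟨hβ0, by linarith⟩
  have hβ'm : β + δ ∈ Set.Icc (0:ℝ) 1 := ⟨by linarith, hβδ⟩
  haveI hP1 : IsProbabilityMeasure (πa β) := hprob β hβm
  haveI hP2 : IsProbabilityMeasure (πa (β + δ)) := hprob _ hβ'm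
  obtain ⟨hIVβ, hMβ⟩ := hMom β hβm
  obtain ⟨hIVβ', hMβ'⟩ := hMom _ hβ'm
  set F : X → X → ℝ := fun x y => Real.exp (min 0 (δ * (V y - V x))) with hFdef
  have hFmeas : Measurable (Function.uncurry F) := by
    apply Real.measurable_exp.comp
    exact measurable_const.min
      (((hV.comp measurable_snd).sub (hV.comp measurable_fst)).const_mul δ)
  have hFle : ∀ x y, F x y ≤ 1 := by
    intro x y
    have := Real.exp_le_exp.mpr (min_le_left 0 (δ * (V y - V x)))
    simpa [hFdef] using this
  have hF0 : ∀ x y, 0 < F x y := fun x y => Real.exp_pos _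
  have hFint : ∀ x, Integrable (fun y => F x y) (πa (β + δ)) := by
    intro x
    refine (integrable_const (1:ℝ)).mono'
      ((hFmeas.comp measurable_prodMk_left).aestronglyMeasurable)
      (Filter.Eventually.of_forall fun y => ?_)
    rw [Real.norm_eq_abs, abs_of_pos (hF0 x y)]
    simpa using hFle x y
  set g : X → ℝ := fun x => ∫ y, F x y ∂(πa (β + δ)) with hgdef
  have hseq : s β (β + δ) = ∫ x, g x ∂(πa β) := by
    rw [hs]
    simp only [add_sub_cancel_left, hgdef, hFdef]
  have hgmeas : StronglyMeasurable g :=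
    hFmeas.stronglyMeasurable.integral_prod_right
  set Mν : ℝ := ∫ y, |V y| ∂(πa (β + δ)) with hMν
  have hinner : ∀ x, |g x - 1| ≤ δ * (Mν + |V x|) := by
    intro x
    have h1' : g x - 1 = ∫ y, (F x y - 1) ∂(πa (β + δ)) := by
      rw [integral_sub (hFint x) (integrable_const 1), integral_const]
      simp [hgdef]
    rw [h1']
    have hIabs : Integrable (fun y => |F x y - 1|) (πa (β + δ)) :=
      ((hFint x).sub (integrable_const 1)).abs
    have hIrhs : Integrable (fun y => δ * (|V y| + |V x|)) (πa (β + δ)) :=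
      (hIVβ'.abs.add (integrable_const _)).const_mul δ
    calc |∫ y, (F x y - 1) ∂(πa (β + δ))|
        ≤ ∫ y, |F x y - 1| ∂(πa (β + δ)) := by
          simpa [Real.norm_eq_abs] using
            norm_integral_le_integral_norm (fun y => F x y - 1) (μ := πa (β + δ))
      _ ≤ ∫ y, δ * (|V y| + |V x|) ∂(πa (β + δ)) := by
          refine integral_mono hIabs hIrhs (fun y => ?_)
          calc |F x y - 1| ≤ |δ * (V y - V x)| := hexp_min _
            _ = δ * |V y - V x| := by rw [abs_mul, abs_of_nonneg hδ0]
            _ ≤ δ * (|V y| + |V x|) :=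
              mul_le_mul_of_nonneg_left (abs_sub (V y) (V x)) hδ0
      _ = δ * (Mν + |V x|) := by
          rw [integral_const_mul, integral_add hIVβ'.abs (integrable_const _),
            integral_const]
          simp [hMν]
  have hgI : Integrable g (πa β) := by
    refine (integrable_const (1:ℝ)).mono' hgmeas.aestronglyMeasurable
      (Filter.Eventually.of_forall fun x => ?_)
    rw [Real.norm_eq_abs, abs_of_nonneg (integral_nonneg fun y => (hF0 x y).le)]
    calc (∫ y, F x y ∂(πa (β + δ))) ≤ ∫ _, (1:ℝ) ∂(πa (β + δ)) :=
          integral_mono (hFint x) (integrable_const 1) (fun y => hFle x y)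
      _ = 1 := by simp
  have hdiff : (∫ x, (g x - 1) ∂(πa β)) = s β (β + δ) - 1 := by
    rw [integral_sub hgI (integrable_const 1), integral_const, hseq]
    simp
  rw [← hdiff]
  have hIrhs2 : Integrable (fun x => δ * (Mν + |V x|)) (πa β) :=
    ((integrable_const Mν).add hIVβ.abs).const_mul δ
  calc |∫ x, (g x - 1) ∂(πa β)| ≤ ∫ x, |g x - 1| ∂(πa β) := by
        simpa [Real.norm_eq_abs] using
          norm_integral_le_integral_norm (fun x => g x - 1) (μ := πa β)
    _ ≤ ∫ x, δ * (Mν + |V x|) ∂(πa β) :=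
        integral_mono (hgI.sub (integrable_const 1)).abs hIrhs2 (fun x => hinner x)
    _ = δ * (Mν + ∫ x, |V x| ∂(πa β)) := by
        rw [integral_const_mul, integral_add (integrable_const _) hIVβ.abs,
          integral_const]
        simp
    _ ≤ δ * (M + M) := by
        refine mul_le_mul_of_nonneg_left (add_le_add hMβ' hMβ) hδ0
    _ ≤ (2 * M + 1) * δ := by nlinarith
end

section
/- If |V|^k is integrable with respect to π_0 and π, then the local communication barrier λ(β) = (1/2) E[|V_1^{(β)} - V_2^{(β)}|], where V_1^{(β)}, V_2^{(β)} are i.i.d. with the law of V under π^{(β)}, is (k-1) times continuously differentiable on [0,1]. -/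
open MeasureTheory Real Set Filter Topology

/-- Convexity-type bound: `|exp s - exp t| ≤ |s - t| * max (exp s) (exp t)`. -/
lemma exp_sub_exp_abs_le (s t : ℝ) :
    |Real.exp s - Real.exp t| ≤ |s - t| * max (Real.exp s) (Real.exp t) := by
  have key : ∀ u v : ℝ, v ≤ u →
      |Real.exp u - Real.exp v| ≤ |u - v| * max (Real.exp u) (Real.exp v) := by
    intro u v huv
    have h1 : (v - u) + 1 ≤ Real.exp (v - u) := Real.add_one_le_exp _
    have h2 : Real.exp u * Real.exp (v - u) = Real.exp v := by
      rw [← Real.exp_add]; ring_nf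
    rw [abs_of_nonneg (sub_nonneg.2 (Real.exp_le_exp.2 huv)),
      abs_of_nonneg (sub_nonneg.2 huv)]
    have h3 : Real.exp u ≤ max (Real.exp u) (Real.exp v) := le_max_left _ _
    nlinarith [Real.exp_pos u, Real.exp_pos v, sub_nonneg.2 huv]
  rcases le_total t s with h | h
  · exact key s t h
  · have := key t s h
    rwa [abs_sub_comm, abs_sub_comm s t, max_comm]

lemma exp_mul_bound {b : ℝ} (w : ℝ) (hb0 : 0 ≤ b) (hb1 : b ≤ 1) :
    Real.exp (-b * w) ≤ 1 + Real.exp (-w) := by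
  rcases le_total 0 w with hw | hw
  · have : -b * w ≤ 0 := by nlinarith
    have := Real.exp_le_one_iff.2 this
    nlinarith [Real.exp_pos (-w)]
  · have : -b * w ≤ -w := by nlinarith
    have := Real.exp_le_exp.2 this
    linarith

lemma exp_slope_bound {b β : ℝ} (w : ℝ) (hb : b ∈ Set.Icc (0:ℝ) 1)
    (hβ : β ∈ Set.Icc (0:ℝ) 1) :
    |Real.exp (-b * w) - Real.exp (-β * w)| ≤ |b - β| * (|w| * (1 + Real.exp (-w))) := by
  have h1 := exp_sub_exp_abs_le (-b * w) (-β * w)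
  have h2 : |(-b * w) - (-β * w)| = |b - β| * |w| := by
    rw [show (-b * w) - (-β * w) = (b - β) * (-w) by ring, abs_mul, abs_neg]
  have h3 : max (Real.exp (-b * w)) (Real.exp (-β * w)) ≤ 1 + Real.exp (-w) :=
    max_le (exp_mul_bound w hb.1 hb.2) (exp_mul_bound w hβ.1 hβ.2)
  calc |Real.exp (-b * w) - Real.exp (-β * w)|
      ≤ |b - β| * |w| * max (Real.exp (-b * w)) (Real.exp (-β * w)) := by rw [← h2]; exact h1
    _ ≤ |b - β| * |w| * (1 + Real.exp (-w)) := by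
        apply mul_le_mul_of_nonneg_left h3 (by positivity)
    _ = |b - β| * (|w| * (1 + Real.exp (-w))) := by ring

section Param

variable {Y : Type*} [MeasurableSpace Y] {ν : Measure Y} [IsFiniteMeasure ν]
  {f W : Y → ℝ}

lemma integrable_param (hf : AEStronglyMeasurable f ν) (hW : Measurable W)
    (h0 : Integrable (fun y => |f y| * (1 + Real.exp (-W y))) ν)
    {b : ℝ} (hb : b ∈ Set.Icc (0:ℝ) 1) :
    Integrable (fun y => f y * Real.exp (-b * W y)) ν := by
  refine h0.mono (hf.mul ((measurable_exp.comp (hW.const_mul (-b))).aestronglyMeasurable)) ?_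
  filter_upwards with y
  have h1 : Real.exp (-b * W y) ≤ 1 + Real.exp (-W y) := exp_mul_bound _ hb.1 hb.2
  have h2 : (0:ℝ) ≤ 1 + Real.exp (-W y) := by positivity
  simp only [Real.norm_eq_abs, abs_mul, Real.abs_exp, abs_abs, abs_of_nonneg h2]
  exact mul_le_mul_of_nonneg_left h1 (abs_nonneg _)

lemma hasDerivWithinAt_param (hf : AEStronglyMeasurable f ν) (hW : Measurable W)
    (h0 : Integrable (fun y => |f y| * (1 + Real.exp (-W y))) ν)
    (h1 : Integrable (fun y => |f y| * |W y| * (1 + Real.exp (-W y))) ν)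
    {β : ℝ} (hβ : β ∈ Set.Icc (0:ℝ) 1) :
    HasDerivWithinAt (fun b => ∫ y, f y * Real.exp (-b * W y) ∂ν)
      (∫ y, (-(f y * W y)) * Real.exp (-β * W y) ∂ν) (Set.Icc 0 1) β := by
  rw [hasDerivWithinAt_iff_tendsto_slope]
  set φ : Y → ℝ → ℝ := fun y c => f y * Real.exp (-c * W y) with hφ
  set G : ℝ → Y → ℝ := fun b y =>
    (f y * Real.exp (-b * W y) - f y * Real.exp (-β * W y)) / (b - β) with hG
  have hmeas : ∀ b : ℝ, AEStronglyMeasurable (fun y => f y * Real.exp (-b * W y)) ν :=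
    fun b => hf.mul ((measurable_exp.comp (hW.const_mul (-b))).aestronglyMeasurable)
  have key : Tendsto (fun b => ∫ y, G b y ∂ν) (𝓝[Set.Icc (0:ℝ) 1 \ {β}] β)
      (𝓝 (∫ y, (-(f y * W y)) * Real.exp (-β * W y) ∂ν)) := by
    apply tendsto_integral_filter_of_dominated_convergence
      (fun y => |f y| * |W y| * (1 + Real.exp (-W y)))
    · filter_upwards with b
      exact (((hmeas b).sub (hmeas β)).mul_const ((b - β)⁻¹)).congr
        (Filter.Eventually.of_forall fun y => (div_eq_mul_inv _ _).symm)
    · filter_upwards [self_mem_nhdsWithin] with b hb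
      filter_upwards with y
      have hbI : b ∈ Set.Icc (0:ℝ) 1 := hb.1
      have hsl := exp_slope_bound (W y) hbI hβ
      simp only [hG, Real.norm_eq_abs, abs_div, ← mul_sub, abs_mul]
      rcases eq_or_ne b β with h | h
      · simp [h]; positivity
      · rw [div_le_iff₀ (by simpa [sub_eq_zero] using h : (0:ℝ) < |b - β|)]
        calc |f y| * |Real.exp (-b * W y) - Real.exp (-β * W y)|
            ≤ |f y| * (|b - β| * (|W y| * (1 + Real.exp (-W y)))) :=
              mul_le_mul_of_nonneg_left hsl (abs_nonneg _)
          _ = |f y| * |W y| * (1 + Real.exp (-W y)) * |b - β| := by ring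
    · exact h1
    · filter_upwards with y
      have hd : HasDerivAt (φ y) (f y * (Real.exp (-β * W y) * -W y)) β := by
        have h1 : HasDerivAt (fun c : ℝ => -c * W y) (-W y) β := by
          simpa using ((hasDerivAt_id β).neg.mul_const (W y))
        exact (h1.exp.const_mul (f y))
      have := hasDerivAt_iff_tendsto_slope.1 hd
      have hmono : 𝓝[Set.Icc (0:ℝ) 1 \ {β}] β ≤ 𝓝[{β}ᶜ] β :=
        nhdsWithin_mono _ (fun x hx => hx.2)
      have h2 : (-(f y * W y)) * Real.exp (-β * W y) = f y * (Real.exp (-β * W y) * -W y) := by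
        ring
      rw [h2]
      refine (this.mono_left hmono).congr (fun b => ?_)
      rw [slope_def_field]
  refine key.congr' ?_
  filter_upwards [self_mem_nhdsWithin] with b hb
  have hbI : b ∈ Set.Icc (0:ℝ) 1 := hb.1
  have hib : Integrable (fun y => f y * Real.exp (-b * W y)) ν :=
    integrable_param hf hW h0 hbI
  have hiβ : Integrable (fun y => f y * Real.exp (-β * W y)) ν :=
    integrable_param hf hW h0 hβ
  rw [slope_def_field]
  simp only [hG]
  rw [integral_div, integral_sub hib hiβ]

lemma continuousOn_param (hf : AEStronglyMeasurable f ν) (hW : Measurable W)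
    (h0 : Integrable (fun y => |f y| * (1 + Real.exp (-W y))) ν) :
    ContinuousOn (fun b => ∫ y, f y * Real.exp (-b * W y) ∂ν) (Set.Icc 0 1) := by
  intro β hβ
  unfold ContinuousWithinAt
  apply tendsto_integral_filter_of_dominated_convergence
    (fun y => |f y| * (1 + Real.exp (-W y)))
  · filter_upwards with b
    exact hf.mul ((measurable_exp.comp (hW.const_mul (-b))).aestronglyMeasurable)
  · filter_upwards [self_mem_nhdsWithin] with b hb
    filter_upwards with y
    have h1 : Real.exp (-b * W y) ≤ 1 + Real.exp (-W y) := exp_mul_bound _ hb.1 hb.2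
    simp only [Real.norm_eq_abs, abs_mul, Real.abs_exp]
    exact mul_le_mul_of_nonneg_left h1 (abs_nonneg _)
  · exact h0
  · filter_upwards with y
    have : Continuous (fun b : ℝ => f y * Real.exp (-b * W y)) := by
      continuity
    exact (this.tendsto β).mono_left nhdsWithin_le_nhds

/-- Main parametric smoothness lemma. -/
lemma contDiffOn_param (hW : Measurable W) (m : ℕ) :
    ∀ (f : Y → ℝ), AEStronglyMeasurable f ν →
      (∀ j ≤ m, Integrable (fun y => |f y| * |W y| ^ j * (1 + Real.exp (-W y))) ν) →
      ContDiffOn ℝ (m : ℕ∞) (fun b => ∫ y, f y * Real.exp (-b * W y) ∂ν)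
        (Set.Icc 0 1) := by
  induction m with
  | zero =>
    intro f hf hint
    have h0 := hint 0 le_rfl
    simp only [pow_zero, mul_one] at h0
    have h := continuousOn_param hf hW h0
    simp only [Nat.cast_zero]
    exact contDiffOn_zero.2 h
  | succ m ih =>
    intro f hf hint
    have hs : UniqueDiffOn ℝ (Set.Icc (0:ℝ) 1) := uniqueDiffOn_Icc zero_lt_one
    have h0 : Integrable (fun y => |f y| * (1 + Real.exp (-W y))) ν := by
      have := hint 0 (Nat.zero_le _)
      simpa using this
    have h1 : Integrable (fun y => |f y| * |W y| * (1 + Real.exp (-W y))) ν := by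
      have := hint 1 (by omega)
      simpa using this
    have hder : ∀ β ∈ Set.Icc (0:ℝ) 1,
        HasDerivWithinAt (fun b => ∫ y, f y * Real.exp (-b * W y) ∂ν)
          (∫ y, (-(f y * W y)) * Real.exp (-β * W y) ∂ν) (Set.Icc 0 1) β :=
      fun β hβ => hasDerivWithinAt_param hf hW h0 h1 hβ
    have hcast : (((m + 1 : ℕ) : ℕ∞) : WithTop ℕ∞) = ((m : ℕ∞) : WithTop ℕ∞) + 1 := by
      push_cast
      rfl
    rw [hcast, contDiffOn_succ_iff_derivWithin hs]
    refine ⟨fun β hβ => ((hder β hβ).differentiableWithinAt), ?_, ?_⟩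
    · intro h; exact absurd h (by simp)
    · have heq : ∀ β ∈ Set.Icc (0:ℝ) 1,
          derivWithin (fun b => ∫ y, f y * Real.exp (-b * W y) ∂ν) (Set.Icc 0 1) β
            = ∫ y, (-(f y * W y)) * Real.exp (-β * W y) ∂ν :=
        fun β hβ => (hder β hβ).derivWithin (hs β hβ)
      have hIH := ih (fun y => -(f y * W y)) ((hf.mul hW.aestronglyMeasurable).neg) ?_
      · exact hIH.congr heq
      · intro j hj
        have := hint (j + 1) (by omega)
        refine this.congr ?_
        filter_upwards with y
        simp only [abs_neg, abs_mul, pow_succ]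
        ring

end Param

lemma pow_le_one_add_pow {a : ℝ} (ha : 0 ≤ a) {j k : ℕ} (hjk : j ≤ k) :
    a ^ j ≤ 1 + a ^ k := by
  rcases le_total a 1 with h | h
  · have := pow_le_one₀ ha h (n := j)
    nlinarith [pow_nonneg ha k]
  · have := pow_le_pow_right₀ h hjk
    nlinarith

/-- If `|V|^k` is integrable with respect to `π₀` and `π`, then the local
communication barrier
`λ(β) = (1/2) E[|V₁^{(β)} - V₂^{(β)}|]
      = (1/(2 Z(β)²)) ∬ |V(x) - V(y)| e^{-β(V(x)+V(y))} dπ₀(x) dπ₀(y)`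
is `(k-1)` times continuously differentiable on `[0,1]`. -/
theorem communication_barrier_smooth {X : Type*} [MeasurableSpace X]
    (μ0 : Measure X) [IsProbabilityMeasure μ0]
    (V : X → ℝ) (hV : Measurable V) (k : ℕ) (hk : 1 ≤ k)
    (h0 : Integrable (fun x => |V x| ^ k) μ0)
    (h1 : Integrable (fun x => |V x| ^ k * Real.exp (-(V x))) μ0)
    (Z lam : ℝ → ℝ)
    (hZ : ∀ β, Z β = ∫ x, Real.exp (-β * V x) ∂μ0)
    (hZpos : ∀ β ∈ Set.Icc (0:ℝ) 1, 0 < Z β)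
    (hlam : ∀ β, lam β = (1 / (2 * (Z β) ^ 2)) *
      ∫ x, ∫ y, |V x - V y| * Real.exp (-β * (V x + V y)) ∂μ0 ∂μ0) :
    ContDiffOn ℝ ((k - 1 : ℕ) : ℕ∞) lam (Set.Icc 0 1) := by
  -- exp(-V) is integrable
  have hVe : Integrable (fun x => Real.exp (-V x)) μ0 := by
    have hbd : Integrable (fun x => Real.exp 1 + |V x| ^ k * Real.exp (-(V x))) μ0 :=
      (integrable_const _).add h1
    refine hbd.mono ((measurable_exp.comp hV.neg).aestronglyMeasurable) ?_
    filter_upwards with x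
    rcases le_total 1 (|V x|) with h | h
    · have h2 : (1:ℝ) ≤ |V x| ^ k := one_le_pow₀ h
      have : Real.exp (-V x) ≤ |V x| ^ k * Real.exp (-V x) := by
        nlinarith [Real.exp_pos (-V x)]
      simp only [Real.norm_eq_abs, Real.abs_exp]
      have hnn : (0:ℝ) ≤ Real.exp 1 + |V x| ^ k * Real.exp (-(V x)) := by positivity
      rw [abs_of_nonneg hnn]
      nlinarith [Real.exp_pos (1:ℝ)]
    · have hle : -V x ≤ 1 := by cases abs_le.1 h; linarith
      have : Real.exp (-V x) ≤ Real.exp 1 := Real.exp_le_exp.2 hle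
      simp only [Real.norm_eq_abs, Real.abs_exp]
      have hnn : (0:ℝ) ≤ Real.exp 1 + |V x| ^ k * Real.exp (-(V x)) := by positivity
      rw [abs_of_nonneg hnn]
      nlinarith [Real.exp_pos (-V x), pow_nonneg (abs_nonneg (V x)) k]
  -- g1, g2 integrable
  have hg1 : Integrable (fun x => (1 + |V x| ^ k) * (1 + Real.exp (-V x))) μ0 := by
    have : (fun x => (1 + |V x| ^ k) * (1 + Real.exp (-V x)))
        = fun x => 1 + |V x| ^ k + Real.exp (-V x) + |V x| ^ k * Real.exp (-(V x)) := by
      funext x; ring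
    rw [this]
    exact (((integrable_const _).add h0).add hVe).add h1
  have hg2 : Integrable (fun x => 1 + Real.exp (-V x)) μ0 := (integrable_const _).add hVe
  -- Z smoothness
  have hZsm : ContDiffOn ℝ ((k - 1 : ℕ) : ℕ∞) Z (Set.Icc 0 1) := by
    have hint : ∀ j ≤ k - 1, Integrable
        (fun x => |(1:ℝ)| * |V x| ^ j * (1 + Real.exp (-V x))) μ0 := by
      intro j hj
      refine hg1.mono ?_ ?_
      · apply Measurable.aestronglyMeasurable
        exact (((measurable_const.mul ((hV.abs.pow_const j)))).mul
          (measurable_const.add (measurable_exp.comp hV.neg)))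
      · filter_upwards with x
        have hvp : |V x| ^ j ≤ 1 + |V x| ^ k :=
          pow_le_one_add_pow (abs_nonneg _) (by omega)
        have he : (0:ℝ) ≤ 1 + Real.exp (-V x) := by positivity
        have hg1nn : (0:ℝ) ≤ (1 + |V x| ^ k) * (1 + Real.exp (-V x)) := by positivity
        have hlnn : (0:ℝ) ≤ |(1:ℝ)| * |V x| ^ j * (1 + Real.exp (-V x)) := by positivity
        simp only [Real.norm_eq_abs]
        rw [abs_of_nonneg hlnn, abs_of_nonneg hg1nn, abs_one, one_mul]
        exact mul_le_mul_of_nonneg_right hvp he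
    have := contDiffOn_param (ν := μ0) hV (k - 1) (fun _ => (1:ℝ))
      aestronglyMeasurable_const hint
    refine this.congr (fun β _ => ?_)
    rw [hZ]; simp
  -- product measure setup
  set ν2 : Measure (X × X) := μ0.prod μ0 with hν2
  have hWp : Measurable (fun p : X × X => V p.1 + V p.2) :=
    (hV.comp measurable_fst).add (hV.comp measurable_snd)
  have hfp : Measurable (fun p : X × X => |V p.1 - V p.2|) :=
    ((hV.comp measurable_fst).sub (hV.comp measurable_snd)).abs
  -- product integrability
  have hprodint : ∀ j ≤ k - 1, Integrable
      (fun p : X × X => |(|V p.1 - V p.2|)| * |V p.1 + V p.2| ^ j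
        * (1 + Real.exp (-(V p.1 + V p.2)))) ν2 := by
    intro j hj
    have hjk : j + 1 ≤ k := by omega
    set B : X × X → ℝ := fun p =>
      (2:ℝ) ^ k * ((1 + |V p.1| ^ k) * (1 + Real.exp (-V p.1)) * (1 + Real.exp (-V p.2))
        + (1 + Real.exp (-V p.1)) * ((1 + |V p.2| ^ k) * (1 + Real.exp (-V p.2)))) with hB
    have hBint : Integrable B ν2 := by
      apply Integrable.const_mul
      exact (hg1.mul_prod hg2).add (hg2.mul_prod hg1)
    refine hBint.mono ?_ ?_
    · exact ((hfp.abs.mul (hWp.abs.pow_const j)).mul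
        (measurable_const.add (measurable_exp.comp hWp.neg))).aestronglyMeasurable
    · filter_upwards with p
      set a := |V p.1| with ha
      set b := |V p.2| with hb2
      have ha0 : 0 ≤ a := abs_nonneg _
      have hb0 : 0 ≤ b := abs_nonneg _
      have h4 : |V p.1 - V p.2| ≤ a + b := (abs_sub _ _)
      have h5 : |V p.1 + V p.2| ≤ a + b := (abs_add_le _ _)
      have h6 : |V p.1 - V p.2| * |V p.1 + V p.2| ^ j ≤ (a + b) ^ (j + 1) := by
        rw [pow_succ']
        exact mul_le_mul h4 (pow_le_pow_left₀ (abs_nonneg _) h5 j) (by positivity)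
          (by positivity)
      have h7 : (a + b) ^ (j + 1) ≤ 2 ^ (j + 1 - 1) * (a ^ (j+1) + b ^ (j+1)) :=
        add_pow_le ha0 hb0 (j + 1)
      have h8 : a ^ (j+1) ≤ 1 + a ^ k := pow_le_one_add_pow ha0 hjk
      have h9 : b ^ (j+1) ≤ 1 + b ^ k := pow_le_one_add_pow hb0 hjk
      have h10 : (2:ℝ) ^ (j + 1 - 1) ≤ 2 ^ k := by
        apply pow_le_pow_right₀ (by norm_num); omega
      have h11 : Real.exp (-(V p.1 + V p.2)) = Real.exp (-V p.1) * Real.exp (-V p.2) := by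
        rw [← Real.exp_add]; ring_nf
      have h12 : 1 + Real.exp (-(V p.1 + V p.2))
          ≤ (1 + Real.exp (-V p.1)) * (1 + Real.exp (-V p.2)) := by
        rw [h11]
        nlinarith [Real.exp_pos (-V p.1), Real.exp_pos (-V p.2)]
      have hexp1 := Real.exp_pos (-V p.1)
      have hexp2 := Real.exp_pos (-V p.2)
      have hexp3 := Real.exp_pos (-(V p.1 + V p.2))
      simp only [Real.norm_eq_abs]
      rw [abs_abs]
      have hLnn : (0:ℝ) ≤ |V p.1 - V p.2| * |V p.1 + V p.2| ^ j
          * (1 + Real.exp (-(V p.1 + V p.2))) := by positivity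
      rw [abs_of_nonneg hLnn]
      have hBnn : (0:ℝ) ≤ B p := by positivity
      rw [abs_of_nonneg hBnn]
      calc |V p.1 - V p.2| * |V p.1 + V p.2| ^ j * (1 + Real.exp (-(V p.1 + V p.2)))
          ≤ (a + b) ^ (j+1) * ((1 + Real.exp (-V p.1)) * (1 + Real.exp (-V p.2))) := by
            apply mul_le_mul h6 h12 (by positivity) (by positivity)
        _ ≤ (2 ^ (j+1-1) * (a ^ (j+1) + b ^ (j+1)))
              * ((1 + Real.exp (-V p.1)) * (1 + Real.exp (-V p.2))) := by
            apply mul_le_mul_of_nonneg_right h7 (by positivity)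
        _ ≤ (2 ^ k * ((1 + a ^ k) + (1 + b ^ k)))
              * ((1 + Real.exp (-V p.1)) * (1 + Real.exp (-V p.2))) := by
            apply mul_le_mul_of_nonneg_right ?_ (by positivity)
            apply mul_le_mul h10 (by linarith) (by positivity) (by positivity)
        _ = B p := by rw [hB]; ring
    -- smoothness of the double-integral part
  have hGsm : ContDiffOn ℝ ((k - 1 : ℕ) : ℕ∞)
      (fun β => ∫ p : X × X, |V p.1 - V p.2| * Real.exp (-β * (V p.1 + V p.2)) ∂ν2)
      (Set.Icc 0 1) :=
    contDiffOn_param (ν := ν2) hWp (k - 1) (fun p => |V p.1 - V p.2|)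
      hfp.aestronglyMeasurable hprodint
  -- Fubini: for β ∈ Icc, the iterated integral equals the product integral
  have hInt2 : ∀ β ∈ Set.Icc (0:ℝ) 1,
      Integrable (fun p : X × X => |V p.1 - V p.2| * Real.exp (-β * (V p.1 + V p.2))) ν2 := by
    intro β hβ
    have h00 := hprodint 0 (Nat.zero_le _)
    simp only [pow_zero, mul_one] at h00
    exact integrable_param hfp.aestronglyMeasurable hWp h00 hβ
  have hfub : ∀ β ∈ Set.Icc (0:ℝ) 1,
      (∫ x, ∫ y, |V x - V y| * Real.exp (-β * (V x + V y)) ∂μ0 ∂μ0)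
        = ∫ p : X × X, |V p.1 - V p.2| * Real.exp (-β * (V p.1 + V p.2)) ∂ν2 :=
    fun β hβ => (integral_prod _ (hInt2 β hβ)).symm
  -- Assemble
  have hden : ContDiffOn ℝ ((k - 1 : ℕ) : ℕ∞) (fun β => 2 * Z β ^ 2) (Set.Icc 0 1) :=
    contDiffOn_const.mul (hZsm.pow 2)
  have hdne : ∀ β ∈ Set.Icc (0:ℝ) 1, 2 * Z β ^ 2 ≠ 0 := by
    intro β hβ
    have := hZpos β hβ
    positivity
  have hfrac : ContDiffOn ℝ ((k - 1 : ℕ) : ℕ∞)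
      ((fun _ => (1:ℝ)) / (fun β => 2 * Z β ^ 2)) (Set.Icc 0 1) :=
    ContDiffOn.div contDiffOn_const hden hdne
  have hmain : ContDiffOn ℝ ((k - 1 : ℕ) : ℕ∞)
      (fun β => (1 / (2 * Z β ^ 2)) *
        ∫ p : X × X, |V p.1 - V p.2| * Real.exp (-β * (V p.1 + V p.2)) ∂ν2)
      (Set.Icc 0 1) := hfrac.mul hGsm
  refine hmain.congr (fun β hβ => ?_)
  rw [hlam β, hfub β hβ]
end

section
/- Under the multimodal decomposition assumption, the local communication barrier decomposes as λ(β) = sum_{k,k'} p_k p_{k'} λ_{k,k'}(β), where λ_{k,k'}(β) = (1/2) E[|V_k^{(β)} - V_{k'}^{(β)}|], and consequently Λ = sum_{k,k'} p_k p_{k'} Λ_{k,k'}. -/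
open MeasureTheory

private lemma comp_le_mix {K : ℕ} (m : Fin K → Measure ℝ) (k : Fin K) :
    m k ≤ ∑ j, m j := by
  intro s
  rw [Measure.coe_finset_sum, Finset.sum_apply]
  exact Finset.single_le_sum (f := fun j => m j s) (fun _ _ => zero_le) (Finset.mem_univ k)

private lemma mix_integrable {K : ℕ} (p : Fin K → ℝ) (hp : ∀ k, 0 < p k)
    (ν : Fin K → Measure ℝ) (g : ℝ → ℝ)
    (hg : Integrable g (∑ j, (ENNReal.ofReal (p j)) • ν j)) (k : Fin K) :
    Integrable g (ν k) := by
  have h1 : Integrable g ((ENNReal.ofReal (p k)) • ν k) :=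
    hg.mono_measure (comp_le_mix (fun j => (ENNReal.ofReal (p j)) • ν j) k)
  have h0 : (ENNReal.ofReal (p k)) ≠ 0 := by
    simp [ENNReal.ofReal_eq_zero, not_le, hp k]
  exact (integrable_smul_measure h0 ENNReal.ofReal_ne_top).mp h1

private lemma mix_integral {K : ℕ} (p : Fin K → ℝ) (hp : ∀ k, 0 < p k)
    (ν : Fin K → Measure ℝ) (g : ℝ → ℝ)
    (hg : Integrable g (∑ j, (ENNReal.ofReal (p j)) • ν j)) :
    ∫ x, g x ∂(∑ j, (ENNReal.ofReal (p j)) • ν j) = ∑ k, p k * ∫ x, g x ∂(ν k) := by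
  rw [integral_finset_sum_measure (fun k _ =>
    hg.mono_measure (comp_le_mix (fun j => (ENNReal.ofReal (p j)) • ν j) k))]
  refine Finset.sum_congr rfl fun k _ => ?_
  rw [integral_smul_measure, ENNReal.toReal_ofReal (hp k).le, smul_eq_mul]

/-- Multimodal decomposition of the communication barrier: if the law of
`V^{(β)}` is the mixture `∑_k p_k ν_k(β)` (with `ν_k(β)` the law of `V_k^{(β)}`
in mode `k`, and `p_k = π(X_k) = π₀(X_k)`), then
`λ(β) = ∑_{k,k'} p_k p_{k'} λ_{k,k'}(β)` and consequently
`Λ = ∑_{k,k'} p_k p_{k'} Λ_{k,k'}`. -/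
theorem multimodal_decomposition (K : ℕ) (hK : 1 ≤ K)
    (p : Fin K → ℝ) (hp : ∀ k, 0 < p k) (hpsum : ∑ k, p k = 1)
    (ν : Fin K → ℝ → Measure ℝ) (hν : ∀ k β, IsProbabilityMeasure (ν k β))
    (μ : ℝ → Measure ℝ)
    (hμ : ∀ β, μ β = ∑ k, (ENNReal.ofReal (p k)) • ν k β)
    (hIntMix : ∀ β ∈ Set.Icc (0:ℝ) 1,
      Integrable (fun q : ℝ × ℝ => |q.1 - q.2|) ((μ β).prod (μ β)))
    (lam : ℝ → ℝ) (lamkk : Fin K → Fin K → ℝ → ℝ)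
    (hlam : ∀ β, lam β = (1/2) * ∫ u, ∫ v, |u - v| ∂(μ β) ∂(μ β))
    (hlamkk : ∀ k k' β, lamkk k k' β = (1/2) * ∫ u, ∫ v, |u - v| ∂(ν k' β) ∂(ν k β))
    (hIntβ : ∀ k k', IntervalIntegrable (lamkk k k') volume 0 1) :
    (∀ β ∈ Set.Icc (0:ℝ) 1, lam β = ∑ k, ∑ k', p k * p k' * lamkk k k' β) ∧
    (∫ β in (0:ℝ)..1, lam β)
      = ∑ k, ∑ k', p k * p k' * ∫ β in (0:ℝ)..1, lamkk k k' β := by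
  have hprob : ∀ β, IsProbabilityMeasure (μ β) := by
    intro β
    constructor
    rw [hμ β]
    simp only [Measure.coe_finset_sum, Finset.sum_apply, Measure.smul_apply,
      smul_eq_mul]
    have h1 : ∀ k : Fin K, ENNReal.ofReal (p k) * (ν k β) Set.univ = ENNReal.ofReal (p k) := by
      intro k
      have := hν k β
      simp [measure_univ]
    rw [Finset.sum_congr rfl (fun k _ => h1 k), ← ENNReal.ofReal_sum_of_nonneg
      (fun k _ => (hp k).le), hpsum, ENNReal.ofReal_one]
  have key : ∀ β ∈ Set.Icc (0:ℝ) 1, lam β = ∑ k, ∑ k', p k * p k' * lamkk k k' β := by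
    intro β hβ
    haveI := hprob β
    have hmix := hIntMix β hβ
    have hsec : ∀ᵐ u ∂(μ β), Integrable (fun v => |u - v|) (μ β) := hmix.prod_right_ae
    obtain ⟨u₀, hu₀⟩ := hsec.exists
    have habs : Integrable (fun v : ℝ => |v|) (μ β) := by
      refine Integrable.mono' (hu₀.add (integrable_const |u₀|))
        (continuous_abs.aestronglyMeasurable) ?_
      filter_upwards with v
      simp only [Real.norm_eq_abs, abs_abs]
      simp only [Pi.add_apply]
      have h1 := abs_sub_abs_le_abs_sub v u₀
      have h2 : |v - u₀| = |u₀ - v| := abs_sub_comm v u₀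
      linarith [abs_nonneg u₀]
    have hall : ∀ u : ℝ, Integrable (fun v => |u - v|) (μ β) := by
      intro u
      refine Integrable.mono' (habs.add (integrable_const |u|))
        ((continuous_const.sub continuous_id).abs.aestronglyMeasurable) ?_
      filter_upwards with v
      simp only [Real.norm_eq_abs, abs_abs]
      simp only [Pi.add_apply]
      have h1 : |u - v| ≤ |u| + |v| := abs_sub u v
      linarith
    have hallν : ∀ u (k : Fin K), Integrable (fun v => |u - v|) (ν k β) := by
      intro u k
      exact mix_integrable p hp (fun j => ν j β) _ ((hμ β) ▸ hall u) k
    have habsν : ∀ k : Fin K, Integrable (fun v : ℝ => |v|) (ν k β) :=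
      fun k => mix_integrable p hp (fun j => ν j β) _ ((hμ β) ▸ habs) k
    have inner_eq : ∀ u : ℝ,
        ∫ v, |u - v| ∂(μ β) = ∑ k', p k' * ∫ v, |u - v| ∂(ν k' β) := by
      intro u
      have h := mix_integral p hp (fun j => ν j β) (fun v => |u - v|) ((hμ β) ▸ hall u)
      rw [← hμ β] at h
      exact h
    have hmeas : ∀ k' : Fin K, StronglyMeasurable (fun u : ℝ => ∫ v, |u - v| ∂(ν k' β)) := by
      intro k'
      haveI := hν k' β
      have h : StronglyMeasurable (Function.uncurry fun u v : ℝ => |u - v|) :=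
        (continuous_abs.comp (continuous_fst.sub continuous_snd)).stronglyMeasurable
      exact h.integral_prod_right
    have hgint : ∀ k k' : Fin K,
        Integrable (fun u : ℝ => ∫ v, |u - v| ∂(ν k' β)) (ν k β) := by
      intro k k'
      haveI := hν k' β
      haveI := hν k β
      refine Integrable.mono' ((habsν k).add (integrable_const (∫ v, |v| ∂(ν k' β))))
        (hmeas k').aestronglyMeasurable ?_
      filter_upwards with u
      rw [Real.norm_eq_abs, abs_of_nonneg (integral_nonneg (fun v => abs_nonneg _))]
      have hle : ∫ v, |u - v| ∂(ν k' β) ≤ ∫ v, |u| + |v| ∂(ν k' β) := by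
        refine integral_mono (hallν u k') ((integrable_const |u|).add (habsν k')) ?_
        intro v
        exact abs_sub u v
      have heq2 : ∫ v, |u| + |v| ∂(ν k' β) = |u| + ∫ v, |v| ∂(ν k' β) := by
        rw [integral_add (integrable_const _) (habsν k'), integral_const]
        simp [measure_univ]
      simp only [Pi.add_apply]
      linarith
    have houter : Integrable (fun u : ℝ => ∫ v, |u - v| ∂(μ β)) (μ β) :=
      hmix.integral_prod_left
    have step1 : ∫ u, ∫ v, |u - v| ∂(μ β) ∂(μ β)
        = ∑ k, p k * ∫ u, ∫ v, |u - v| ∂(μ β) ∂(ν k β) := by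
      have h := mix_integral p hp (fun j => ν j β)
        (fun u => ∫ v, |u - v| ∂(μ β)) ((hμ β) ▸ houter)
      rw [← hμ β] at h
      exact h
    have main : ∫ u, ∫ v, |u - v| ∂(μ β) ∂(μ β)
        = ∑ k, p k * ∑ k', p k' * ∫ u, ∫ v, |u - v| ∂(ν k' β) ∂(ν k β) := by
      rw [step1]
      refine Finset.sum_congr rfl fun k _ => ?_
      congr 1
      rw [integral_congr_ae (Filter.Eventually.of_forall fun u => inner_eq u),
        integral_finset_sum _ (fun k' _ => (hgint k k').const_mul (p k'))]
      exact Finset.sum_congr rfl fun k' _ => integral_const_mul _ _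
    rw [hlam β, main, Finset.mul_sum]
    refine Finset.sum_congr rfl fun k _ => ?_
    rw [Finset.mul_sum, Finset.mul_sum]
    refine Finset.sum_congr rfl fun k' _ => ?_
    rw [hlamkk k k' β]
    ring
  refine ⟨key, ?_⟩
  have hsumint : ∀ k : Fin K,
      IntervalIntegrable (fun β => ∑ k', p k * p k' * lamkk k k' β) volume 0 1 := by
    intro k
    have h := IntervalIntegrable.sum (μ := volume) (a := (0:ℝ)) (b := 1) Finset.univ
      (f := fun k' : Fin K => fun β => p k * p k' * lamkk k k' β)
      (fun k' _ => (hIntβ k k').const_mul _)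
    have he : (∑ k' : Fin K, fun β => p k * p k' * lamkk k k' β)
        = fun β => ∑ k', p k * p k' * lamkk k k' β := by
      ext β; simp
    rw [he] at h
    exact h
  have heq : Set.EqOn lam (fun β => ∑ k, ∑ k', p k * p k' * lamkk k k' β)
      (Set.uIcc (0:ℝ) 1) := by
    intro β hβ
    rw [Set.uIcc_of_le (by norm_num : (0:ℝ) ≤ 1)] at hβ
    exact key β hβ
  rw [intervalIntegral.integral_congr heq,
    intervalIntegral.integral_finset_sum (fun k _ => hsumint k)]
  refine Finset.sum_congr rfl fun k _ => ?_
  rw [intervalIntegral.integral_finset_sum (fun k' _ =>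
    (hIntβ k k').const_mul (p k * p k'))]
  refine Finset.sum_congr rfl fun k' _ => ?_
  rw [intervalIntegral.integral_const_mul]
end

section
/- For the discrete multimodal model on X = {0,...,2k} with π^{(β)}(x) = a^{β·1_Even(x)}/Z(β), Z(β) = k + (k+1)a^β, the local communication barrier equals λ(β) = k(k+1) a^β log(a) / (k + (k+1)a^β)², and its integral over [0,1] equals Λ = k(k+1)(a-1) / ((2k+1)(k + (k+1)a)). -/
open Finset

lemma card_filter_even (k : ℕ) :
    ((Finset.range (2*k+1)).filter (fun x => Even x)).card = k+1 := by
  induction k with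
  | zero => decide
  | succ n ih =>
    have h : 2*(n+1)+1 = (2*n+1) + 1 + 1 := by ring
    rw [h, Finset.range_add_one, Finset.range_add_one, Finset.filter_insert, Finset.filter_insert]
    have hodd : ¬ Even (2*n+1) := by simp [Nat.even_add_one, Nat.even_mul]
    have heven : Even (2*n+1+1) := by
      have : 2*n+1+1 = 2*(n+1) := by ring
      rw [this]; exact even_two_mul _
    rw [if_neg hodd, if_pos heven, Finset.card_insert_of_notMem, ih]
    intro hmem
    have := Finset.mem_of_mem_filter _ hmem
    simp at this

lemma card_filter_odd (k : ℕ) :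
    ((Finset.range (2*k+1)).filter (fun x => ¬ Even x)).card = k := by
  have h := Finset.card_filter_add_card_filter_not (s := Finset.range (2*k+1))
    (fun x => Even x)
  rw [card_filter_even, Finset.card_range] at h
  omega

/-- Communication barrier of the discrete multimodal model on `{0,…,2k}` with
`π^{(β)}(x) = a^{β 1_Even(x)} / Z(β)`, `Z(β) = k + (k+1) a^β`:
`λ(β) = k(k+1) a^β log a / (k + (k+1) a^β)²` and
`Λ = ∫₀¹ λ = k(k+1)(a-1) / ((2k+1)(k + (k+1) a))`. -/
theorem discrete_multimodal_barrier (k : ℕ) (a : ℝ) (ha : 1 < a)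
    (e : ℕ → ℝ) (he : ∀ x, e x = if Even x then 1 else 0)
    (Zb : ℝ → ℝ) (hZ : ∀ β, Zb β = (k : ℝ) + ((k : ℝ) + 1) * a ^ β)
    (lam : ℝ → ℝ)
    (hlam : ∀ β, lam β = (1/2) *
      ∑ x ∈ Finset.range (2*k+1), ∑ y ∈ Finset.range (2*k+1),
        (a ^ (β * e x) / Zb β) * (a ^ (β * e y) / Zb β) *
          |(-(e x) * Real.log a) - (-(e y) * Real.log a)|) :
    (∀ β : ℝ, lam β
        = (k : ℝ) * ((k : ℝ) + 1) * a ^ β * Real.log a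
            / ((k : ℝ) + ((k : ℝ) + 1) * a ^ β) ^ 2) ∧
    (∫ β in (0:ℝ)..1, lam β)
      = (k : ℝ) * ((k : ℝ) + 1) * (a - 1)
          / ((2 * (k : ℝ) + 1) * ((k : ℝ) + ((k : ℝ) + 1) * a)) := by
  have ha0 : (0:ℝ) < a := lt_trans one_pos ha
  have hlog : 0 < Real.log a := Real.log_pos ha
  have hZpos : ∀ β : ℝ, 0 < Zb β := by
    intro β
    rw [hZ]
    have : (0:ℝ) < ((k:ℝ)+1) * a ^ β :=
      mul_pos (by positivity) (Real.rpow_pos_of_pos ha0 β)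
    positivity
  -- Part 1: the formula for lam
  have part1 : ∀ β : ℝ, lam β
      = (k : ℝ) * ((k : ℝ) + 1) * a ^ β * Real.log a
          / ((k : ℝ) + ((k : ℝ) + 1) * a ^ β) ^ 2 := by
    intro β
    set Z := Zb β with hZdef
    set A := a ^ β with hA
    set c := Real.log a with hc
    set D := A * c / (Z * Z) with hD
    have hFterm : ∀ x y : ℕ,
        (a ^ (β * e x) / Z) * (a ^ (β * e y) / Z) *
          |(-(e x) * c) - (-(e y) * c)| =
        if (Even x ↔ Even y) then 0 else D := by
      intro x y
      rcases Nat.even_or_odd x with hx | hx <;> rcases Nat.even_or_odd y with hy | hy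
      · rw [he x, he y, if_pos hx, if_pos hy, if_pos (by simp [hx, hy])]
        simp
      · rw [he x, he y, if_pos hx, if_neg (Nat.not_even_iff_odd.mpr hy),
          if_neg (by simp [hx, Nat.not_even_iff_odd.mpr hy])]
        rw [mul_one, mul_zero, Real.rpow_zero, hD]
        rw [show (-(1:ℝ) * c) - (-(0:ℝ) * c) = -c by ring, abs_neg, abs_of_pos hlog]
        have hZne : Z ≠ 0 := ne_of_gt (hZpos β)
        field_simp
        try ring
      · rw [he x, he y, if_neg (Nat.not_even_iff_odd.mpr hx), if_pos hy,
          if_neg (by simp [hy, Nat.not_even_iff_odd.mpr hx])]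
        rw [mul_one, mul_zero, Real.rpow_zero, hD]
        rw [show (-(0:ℝ) * c) - (-(1:ℝ) * c) = c by ring, abs_of_pos hlog]
        have hZne : Z ≠ 0 := ne_of_gt (hZpos β)
        field_simp
        try ring
      · rw [he x, he y, if_neg (Nat.not_even_iff_odd.mpr hx),
          if_neg (Nat.not_even_iff_odd.mpr hy),
          if_pos (by simp [Nat.not_even_iff_odd.mpr hx, Nat.not_even_iff_odd.mpr hy])]
        simp
    have hinner : ∀ x : ℕ,
        ∑ y ∈ Finset.range (2*k+1), (if (Even x ↔ Even y) then (0:ℝ) else D)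
          = if Even x then (k:ℝ) * D else ((k:ℝ)+1) * D := by
      intro x
      by_cases hx : Even x
      · rw [if_pos hx]
        have : ∀ y : ℕ, (if (Even x ↔ Even y) then (0:ℝ) else D)
            = if Even y then 0 else D := by
          intro y
          by_cases hy : Even y <;> simp [hx, hy]
        rw [Finset.sum_congr rfl (fun y _ => this y), Finset.sum_ite,
          Finset.sum_const, Finset.sum_const, card_filter_odd]
        simp
      · rw [if_neg hx]
        have : ∀ y : ℕ, (if (Even x ↔ Even y) then (0:ℝ) else D)
            = if Even y then D else 0 := by
          intro y
          by_cases hy : Even y <;> simp [hx, hy]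
        rw [Finset.sum_congr rfl (fun y _ => this y), Finset.sum_ite,
          Finset.sum_const, Finset.sum_const, card_filter_even]
        simp
        try ring
    have hdouble : ∑ x ∈ Finset.range (2*k+1), ∑ y ∈ Finset.range (2*k+1),
        (a ^ (β * e x) / Z) * (a ^ (β * e y) / Z) *
          |(-(e x) * c) - (-(e y) * c)|
        = 2 * (k:ℝ) * ((k:ℝ)+1) * D := by
      calc ∑ x ∈ Finset.range (2*k+1), ∑ y ∈ Finset.range (2*k+1),
            (a ^ (β * e x) / Z) * (a ^ (β * e y) / Z) *
              |(-(e x) * c) - (-(e y) * c)|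
          = ∑ x ∈ Finset.range (2*k+1),
              (if Even x then (k:ℝ) * D else ((k:ℝ)+1) * D) := by
            refine Finset.sum_congr rfl fun x _ => ?_
            rw [← hinner x]
            exact Finset.sum_congr rfl fun y _ => hFterm x y
        _ = ((k:ℝ)+1) * ((k:ℝ) * D) + (k:ℝ) * (((k:ℝ)+1) * D) := by
            rw [Finset.sum_ite, Finset.sum_const, Finset.sum_const,
              card_filter_even, card_filter_odd]
            push_cast
            simp [nsmul_eq_mul]
        _ = 2 * (k:ℝ) * ((k:ℝ)+1) * D := by ring
    rw [hlam β, hdouble, hD, hA, hc, hZdef, hZ β]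
    have hZne : (k : ℝ) + ((k : ℝ) + 1) * a ^ β ≠ 0 := by
      have := hZpos β; rw [hZ β] at this; exact ne_of_gt this
    field_simp
  refine ⟨part1, ?_⟩
  -- Part 2: the integral
  set c := Real.log a with hc
  set F : ℝ → ℝ := fun β => -(k:ℝ) / ((k:ℝ) + ((k:ℝ)+1) * a ^ β) with hF
  have hden : ∀ β : ℝ, (0:ℝ) < (k:ℝ) + ((k:ℝ)+1) * a ^ β := by
    intro β
    have : (0:ℝ) < ((k:ℝ)+1) * a ^ β :=
      mul_pos (by positivity) (Real.rpow_pos_of_pos ha0 β)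
    positivity
  have hderiv : ∀ β ∈ Set.uIcc (0:ℝ) 1, HasDerivAt F (lam β) β := by
    intro β _
    have h1 : HasDerivAt (fun β : ℝ => a ^ β) (a ^ β * c) β :=
      (Real.hasStrictDerivAt_const_rpow ha0 β).hasDerivAt
    have h2 : HasDerivAt (fun β : ℝ => (k:ℝ) + ((k:ℝ)+1) * a ^ β)
        (((k:ℝ)+1) * (a ^ β * c)) β :=
      ((h1.const_mul ((k:ℝ)+1)).const_add (k:ℝ))
    have h3 : HasDerivAt F
        ((k:ℝ) * (((k:ℝ)+1) * (a ^ β * c)) / ((k:ℝ) + ((k:ℝ)+1) * a ^ β) ^ 2) β := by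
      have := ((hasDerivAt_const β (-(k:ℝ))).div h2 (ne_of_gt (hden β)))
      simpa [hF, Pi.div_def] using this
    have heq : ((k:ℝ) * (((k:ℝ)+1) * (a ^ β * c)) / ((k:ℝ) + ((k:ℝ)+1) * a ^ β) ^ 2)
        = lam β := by
      rw [part1 β, hc]
      ring
    rwa [heq] at h3
  have hcontA : Continuous (fun β : ℝ => a ^ β) :=
    continuous_iff_continuousAt.mpr fun β =>
      (Real.hasStrictDerivAt_const_rpow ha0 β).hasDerivAt.continuousAt
  have hcont : Continuous lam := by
    have : Continuous (fun β : ℝ => (k : ℝ) * ((k : ℝ) + 1) * a ^ β * Real.log a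
        / ((k : ℝ) + ((k : ℝ) + 1) * a ^ β) ^ 2) := by
      apply Continuous.div
      · fun_prop
      · fun_prop
      · intro β
        exact pow_ne_zero _ (ne_of_gt (hden β))
    have hfun : lam = (fun β : ℝ => (k : ℝ) * ((k : ℝ) + 1) * a ^ β * Real.log a
        / ((k : ℝ) + ((k : ℝ) + 1) * a ^ β) ^ 2) := funext part1
    rw [hfun]; exact this
  have hint : IntervalIntegrable lam MeasureTheory.volume 0 1 :=
    hcont.intervalIntegrable 0 1
  rw [intervalIntegral.integral_eq_sub_of_hasDerivAt hderiv hint]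
  rw [hF]
  simp only
  rw [Real.rpow_one, Real.rpow_zero]
  have h1 : (0:ℝ) < (k:ℝ) + ((k:ℝ)+1) * a := by nlinarith [Nat.cast_nonneg (α := ℝ) k]
  have h2 : (0:ℝ) < (k:ℝ) + ((k:ℝ)+1) * 1 := by positivity
  have h3 : (0:ℝ) < 2*(k:ℝ)+1 := by positivity
  field_simp
  ring
end

section
/- Suppose k copies of PT are run with N+1 chains each under the core constraint k(N+1) = N̄, and each copy has round trip rate 1/(2(1+E)) with E = N r/(1-r) and r = Λ/N. Then the total round trip rate equals τ_Λ(N) = N̄(1 - Λ/N) / (2(N+1)(1 - Λ/N + Λ)), and over real N > Λ this is maximized at N = 2Λ. -/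
/-- Optimal trade-off between the number of chains and the number of PT copies:
with `k(N+1) = N̄` copies of PT, each with equi-acceptance rejection `r = Λ/N`
and inefficiency `E = N r/(1-r)`, the total round trip rate is
`τ_Λ(N) = N̄ (1-Λ/N) / (2(N+1)(1-Λ/N+Λ))`; over real `N > Λ` it is uniquely
maximized at `N = 2Λ`, with optimal value `(N̄/(2Λ+1)) / (2+4Λ)`. -/
theorem optimal_number_of_chains (Λ Nbar : ℝ) (hΛ : 0 < Λ) (hNbar : 0 < Nbar)
    (τ : ℝ → ℝ)
    (hτ : ∀ N : ℝ, τ N = Nbar * (1 - Λ / N) / (2 * (N + 1) * (1 - Λ / N + Λ))) :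
    (∀ N k r E : ℝ, Λ < N → k * (N + 1) = Nbar → r = Λ / N → E = N * r / (1 - r) →
      k * (1 / (2 * (1 + E))) = τ N) ∧
    deriv τ (2 * Λ) = 0 ∧
    (∀ N : ℝ, Λ < N → N ≠ 2 * Λ → τ N < τ (2 * Λ)) ∧
    τ (2 * Λ) = (Nbar / (2 * Λ + 1)) * (1 / (2 + 4 * Λ)) := by
  -- basic positivity facts for N > Λ
  have key : ∀ N : ℝ, Λ < N →
      τ N = Nbar * (N - Λ) / (2 * (N + 1) * (N * (1 + Λ) - Λ)) := by
    intro N hN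
    have hN0 : (0:ℝ) < N := lt_trans hΛ hN
    have hN1 : (0:ℝ) < N + 1 := by linarith
    have hden : (0:ℝ) < N * (1 + Λ) - Λ := by nlinarith
    have hB : 1 - Λ / N = (N - Λ) / N := by field_simp
    have hA : 1 - Λ / N + Λ = (N * (1 + Λ) - Λ) / N := by
      rw [hB]; field_simp; ring
    rw [hτ N, hA, hB]
    rw [div_eq_div_iff (by positivity) (by positivity)]
    field_simp
  have h2Λ : Λ < 2 * Λ := by linarith
  refine ⟨?_, ?_, ?_, ?_⟩
  · intro N k r E hN hk hr hE
    have hN0 : (0:ℝ) < N := lt_trans hΛ hN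
    have hN1 : (0:ℝ) < N + 1 := by linarith
    have hr1 : 1 - r = (N - Λ) / N := by rw [hr]; field_simp
    have hNΛ : (0:ℝ) < N - Λ := by linarith
    have hE' : E = N * Λ / (N - Λ) := by
      rw [hE, hr1, hr]; field_simp
    have hk' : k = Nbar / (N + 1) := by
      field_simp at hk ⊢; linarith [hk]
    rw [key N hN, hk', hE']
    have h1E : (0:ℝ) < 1 + N * Λ / (N - Λ) := by positivity
    have hden : (0:ℝ) < N * (1 + Λ) - Λ := by nlinarith
    field_simp
    ring
  · -- derivative at 2Λ
    set f : ℝ → ℝ := fun N => Nbar * (N - Λ) / (2 * (N + 1) * (N * (1 + Λ) - Λ)) with hf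
    have heq : τ =ᶠ[nhds (2 * Λ)] f := by
      filter_upwards [isOpen_Ioi.mem_nhds (show (2*Λ) ∈ Set.Ioi Λ from h2Λ)] with N hN
      exact key N hN
    rw [heq.deriv_eq]
    have hx := h2Λ
    set x := 2 * Λ with hxdef
    have hvx : 2 * (x + 1) * (x * (1 + Λ) - Λ) ≠ 0 := by
      have : (0:ℝ) < x * (1 + Λ) - Λ := by rw [hxdef]; nlinarith
      have : (0:ℝ) < x + 1 := by rw [hxdef]; nlinarith
      positivity
    have hu : HasDerivAt (fun N : ℝ => Nbar * (N - Λ)) Nbar x := by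
      have := ((hasDerivAt_id x).sub_const Λ).const_mul Nbar
      simpa using this
    have hv : HasDerivAt (fun N : ℝ => 2 * (N + 1) * (N * (1 + Λ) - Λ))
        (2 * (x * (1 + Λ) - Λ) + 2 * (x + 1) * (1 + Λ)) x := by
      have h1 : HasDerivAt (fun N : ℝ => 2 * (N + 1)) 2 x := by
        have := ((hasDerivAt_id x).add_const 1).const_mul (2:ℝ)
        simpa using this
      have h2 : HasDerivAt (fun N : ℝ => N * (1 + Λ) - Λ) (1 + Λ) x := by
        have := ((hasDerivAt_id x).mul_const (1 + Λ)).sub_const Λ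
        simpa using this
      have := h1.mul h2
      exact this
    have hd := hu.div hv hvx
    rw [show deriv f x = _ from hd.deriv]
    rw [hxdef]
    have hden : 2 * (2 * Λ + 1) * ((2 * Λ) * (1 + Λ) - Λ) ≠ 0 := by
      have : (0:ℝ) < (2*Λ) * (1 + Λ) - Λ := by nlinarith
      have : (0:ℝ) < 2 * Λ + 1 := by nlinarith
      positivity
    rw [div_eq_zero_iff]
    left
    ring
  · intro N hN hNe
    rw [key N hN, key (2*Λ) h2Λ]
    have hN0 : (0:ℝ) < N := lt_trans hΛ hN
    have hB1 : (0:ℝ) < N * (1 + Λ) - Λ := by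
      nlinarith [mul_lt_mul_of_pos_right hN hΛ]
    have hB2 : (0:ℝ) < (2*Λ) * (1 + Λ) - Λ := by nlinarith [mul_pos hΛ hΛ]
    have hd1 : (0:ℝ) < 2 * (N + 1) * (N * (1 + Λ) - Λ) := by positivity
    have hd2 : (0:ℝ) < 2 * (2*Λ + 1) * ((2*Λ) * (1 + Λ) - Λ) := by positivity
    rw [div_lt_div_iff₀ hd1 hd2]
    have hsq : (0:ℝ) < (N - 2*Λ)^2 := by
      have : N - 2*Λ ≠ 0 := fun h => hNe (by linarith)
      positivity
    nlinarith [mul_pos hNbar (mul_pos (by positivity : (0:ℝ) < 1 + Λ) hsq)]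
  · rw [key (2*Λ) h2Λ]
    have h1 : (0:ℝ) < 2 * Λ + 1 := by linarith
    have h2 : (0:ℝ) < 2 + 4 * Λ := by linarith
    have h3 : (0:ℝ) < (2*Λ) * (1 + Λ) - Λ := by nlinarith
    rw [div_mul_div_comm, div_eq_div_iff (mul_pos (mul_pos two_pos h1) h3).ne' (mul_pos h1 h2).ne']
    ring
end

section
/- The DEO transition kernel K^DEO on {0,...,N} × {-1,+1}, defined by moving from (i,ε) to (i+ε reflected at boundaries, with direction kept on success) with probability s^{(i,i+ε)} and to (i,-ε) on rejection, satisfies the skew-detailed balance condition K^DEO((i,ε),(i',ε')) = K^DEO((i',-ε'),(i,-ε)) and leaves the uniform distribution on {0,...,N} × {-1,+1} invariant. -/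
/-- The DEO transition kernel on `{0,…,N} × {-1,+1}` (direction encoded by a
`Bool`): from `(i, ε)` the index moves one step in direction `ε` with the
corresponding swap probability keeping its direction, and the direction flips on
rejection or at the boundaries. -/
def deoKernel (N : ℕ) (s : ℕ → ℝ) : ℕ × Bool → ℕ × Bool → ℝ :=
  fun p q =>
    match p with
    | (i, true) =>
      if i < N then
        (if q = (i + 1, true) then s (i + 1) else 0)
          + (if q = (i, false) then 1 - s (i + 1) else 0)
      else
        if q = (i, false) then 1 else 0
    | (i, false) =>
      if 0 < i then
        (if q = (i - 1, false) then s i else 0)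
          + (if q = (i, true) then 1 - s i else 0)
      else
        if q = (i, true) then 1 else 0

/-- The DEO kernel satisfies the skew-detailed balance condition
`K((i,ε),(i',ε')) = K((i',-ε'),(i,-ε))` and leaves the uniform distribution on
`{0,…,N} × {-1,+1}` invariant. -/
theorem deo_skew_detailed_balance (N : ℕ) (s : ℕ → ℝ)
    (hs : ∀ i, 1 ≤ i → i ≤ N → 0 ≤ s i ∧ s i ≤ 1) :
    (∀ p q : ℕ × Bool, p.1 ≤ N → q.1 ≤ N →
      deoKernel N s p q = deoKernel N s (q.1, !q.2) (p.1, !p.2)) ∧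
    (∀ q : ℕ × Bool, q.1 ≤ N →
      ∑ i ∈ Finset.range (N + 1),
        (deoKernel N s (i, true) q + deoKernel N s (i, false) q) = 1) := by
  
  constructor
  · rintro ⟨i, bi⟩ ⟨j, bj⟩ hp hq
    replace hp : i ≤ N := hp
    replace hq : j ≤ N := hq
    cases bi <;> cases bj <;>
      simp only [deoKernel, Prod.mk.injEq, Bool.not_true, Bool.not_false,
        Bool.false_eq_true, Bool.true_eq_false, and_false, and_true, and_self,
        if_false, if_true, ite_false, ite_true] <;>
      split_ifs
    all_goals try first
      | rfl
      | omega
      | norm_num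
    all_goals exact congrArg s (by omega)
  · rintro ⟨j, b⟩ hq
    replace hq : j ≤ N := hq
    cases b
    · -- q = (j, false)
      have key : ∀ i ∈ Finset.range (N + 1),
          deoKernel N s (i, true) (j, false) + deoKernel N s (i, false) (j, false)
            = (if i = j + 1 then s (j + 1) else 0)
              + (if i = j then (if j < N then 1 - s (j + 1) else 1) else 0) := by
        intro i hi
        rw [Finset.mem_range] at hi
        simp only [deoKernel, Prod.mk.injEq, Bool.false_eq_true, Bool.true_eq_false,
          and_false, and_true, and_self, if_false, if_true, ite_false, ite_true]
        split_ifs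
        all_goals try omega
        all_goals try norm_num
        all_goals try (exact congrArg s (by omega))
      rw [Finset.sum_congr rfl key, Finset.sum_add_distrib,
        Finset.sum_ite_eq' (Finset.range (N + 1)) (j + 1),
        Finset.sum_ite_eq' (Finset.range (N + 1)) j]
      simp only [Finset.mem_range]
      split_ifs <;> first | omega | ring
    · -- q = (j, true)
      have key : ∀ i ∈ Finset.range (N + 1),
          deoKernel N s (i, true) (j, true) + deoKernel N s (i, false) (j, true)
            = (if 1 ≤ j ∧ i = j - 1 then s j else 0)
              + (if i = j then (if 0 < j then 1 - s j else 1) else 0) := by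
        intro i hi
        rw [Finset.mem_range] at hi
        simp only [deoKernel, Prod.mk.injEq, Bool.false_eq_true, Bool.true_eq_false,
          and_false, and_true, and_self, if_false, if_true, ite_false, ite_true]
        split_ifs
        all_goals try omega
        all_goals try norm_num
        all_goals try (exact congrArg s (by omega))
      rw [Finset.sum_congr rfl key, Finset.sum_add_distrib,
        Finset.sum_ite_eq' (Finset.range (N + 1)) j]
      rcases Nat.eq_zero_or_pos j with h0 | h0
      · subst h0
        simp
      · have h1 : ∀ i ∈ Finset.range (N + 1),
            (if 1 ≤ j ∧ i = j - 1 then s j else 0) = (if i = j - 1 then s j else 0) := by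
          intro i hi
          split_ifs <;> first | rfl | omega
        rw [Finset.sum_congr rfl h1, Finset.sum_ite_eq' (Finset.range (N + 1)) (j - 1)]
        simp only [Finset.mem_range]
        split_ifs <;> first | omega | ring
end
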